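/- Let (K, v) be a valued field with value group Γ, residue field k of characteristic ≠ 2. Let a₁, …, a_n ∈ O^× be units such that the residue form ⟨ā₁, …, ā_n⟩ is anisotropic over k, and let b ∈ K^× be an element whose value v(b) is not 2-divisible in Γ. Then the quadratic form ⟨a₁, …, a_n, a₁b, …, a_nb⟩ is anisotropic over the henselization, and in particular its residue-level analogue: the form ⟨ā₁,…,ā_n, ā₁β,…,ā_nβ⟩ over a valued residue extension with β of odd value is anisotropic. -/

import Mathlib

/-- Let `(K, v)` be a valued field (valuation ring `O`) whose residue field has
characteristic `≠ 2`, let `a₁, …, a_n` be units of `O` such that the residue form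
`⟨ā₁, …, ā_n⟩` is anisotropic over the residue field, and let `b ∈ K^×` have value
not `2`-divisible in the value group.  Then the quadratic form
`⟨a₁, …, a_n, a₁b, …, a_nb⟩` is anisotropic over `K`. -/
theorem anisotropic_of_residue_anisotropic_and_value_not_two_divisible
    {K : Type*} [Field K] (O : ValuationSubring K)
    (hchar : (2 : IsLocalRing.ResidueField O) ≠ 0)
    {n : ℕ} (a : Fin n → O) (ha : ∀ i, IsUnit (a i))
    (hres : ∀ x : Fin n → IsLocalRing.ResidueField O,
      ∑ i, IsLocalRing.residue O (a i) * x i ^ 2 = 0 → ∀ i, x i = 0)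
    (b : K) (hb : b ≠ 0)
    (hb2 : ¬ ∃ c : K, O.valuation b = (O.valuation c) ^ 2) :
    ∀ x y : Fin n → K,
      ∑ i, (a i : K) * x i ^ 2 + b * ∑ i, (a i : K) * y i ^ 2 = 0 →
        (∀ i, x i = 0) ∧ (∀ i, y i = 0) := by
  set v := O.valuation with hv
  -- Key lemma: for x not identically zero, v(∑ aᵢ xᵢ²) = v(x j)² for a maximizing j.
  have key : ∀ x : Fin n → K, (∃ i, x i ≠ 0) →
      ∃ j, x j ≠ 0 ∧ v (∑ i, (a i : K) * x i ^ 2) = v (x j) ^ 2 := by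
    rintro x ⟨i0, hi0⟩
    obtain ⟨j, -, hj⟩ := Finset.exists_max_image Finset.univ (fun i => v (x i))
      ⟨i0, Finset.mem_univ i0⟩
    have hxj : x j ≠ 0 := by
      intro h
      have h1 : v (x i0) ≤ v (x j) := hj i0 (Finset.mem_univ i0)
      rw [h, map_zero] at h1
      exact hi0 ((map_eq_zero v).1 (le_zero_iff.1 h1))
    have hvxj : v (x j) ≠ 0 := (map_ne_zero v).2 hxj
    -- the rescaled vector lands in O
    have hmem : ∀ i, x i / x j ∈ O := by
      intro i
      apply O.mem_of_valuation_le_one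
      rw [map_div₀]
      exact div_le_one_of_le₀ (hj i (Finset.mem_univ i)) zero_le'
    set w : Fin n → O := fun i => ⟨x i / x j, hmem i⟩ with hw
    have hwj : w j = 1 := by
      ext
      simp [hw, div_self hxj]
    set S : O := ∑ i, a i * w i ^ 2 with hS
    -- the sum factors
    have hfac : ∑ i, (a i : K) * x i ^ 2 = (x j) ^ 2 * (S : K) := by
      rw [hS]
      push_cast
      rw [Finset.mul_sum]
      refine Finset.sum_congr rfl fun i _ => ?_
      rw [show ((w i : O) : K) = x i / x j from rfl, div_pow]
      field_simp
    -- S is a unit in O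
    have hSres : IsLocalRing.residue O S ≠ 0 := by
      intro h0
      have := hres (fun i => IsLocalRing.residue O (w i)) ?_ j
      · rw [hwj, map_one] at this
        exact one_ne_zero this
      · rw [← h0, hS]
        simp [map_sum]
    have hSunit : IsUnit S := by
      by_contra hS'
      exact hSres ((IsLocalRing.residue_eq_zero_iff _).2
        ((IsLocalRing.mem_maximalIdeal _).2 hS'))
    have hvS : v (S : K) = 1 := O.valuation_unit hSunit.unit
    refine ⟨j, hxj, ?_⟩
    rw [hfac, map_mul, hvS, mul_one, map_pow]
  intro x y hsum
  by_cases hx : ∀ i, x i = 0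
  · refine ⟨hx, ?_⟩
    have hSx : ∑ i, (a i : K) * x i ^ 2 = 0 := by
      simp [hx]
    rw [hSx, zero_add] at hsum
    have hSy : ∑ i, (a i : K) * y i ^ 2 = 0 := by
      rcases mul_eq_zero.1 hsum with h | h
      · exact absurd h hb
      · exact h
    by_contra hy
    push_neg at hy
    obtain ⟨k, hyk, hvy⟩ := key y hy
    rw [hSy, map_zero] at hvy
    exact (map_ne_zero v).2 hyk (pow_eq_zero_iff two_ne_zero |>.1 hvy.symm)
  · exfalso
    push_neg at hx
    obtain ⟨j, hxj, hvx⟩ := key x hx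
    have hvxj : v (x j) ≠ 0 := (map_ne_zero v).2 hxj
    by_cases hy : ∀ i, y i = 0
    · have hSy : ∑ i, (a i : K) * y i ^ 2 = 0 := by simp [hy]
      rw [hSy, mul_zero, add_zero] at hsum
      rw [hsum, map_zero] at hvx
      exact hvxj (pow_eq_zero_iff two_ne_zero |>.1 hvx.symm)
    · push_neg at hy
      obtain ⟨k, hyk, hvy⟩ := key y hy
      have hvyk : v (y k) ≠ 0 := (map_ne_zero v).2 hyk
      have heq : ∑ i, (a i : K) * x i ^ 2 = -(b * ∑ i, (a i : K) * y i ^ 2) :=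
        eq_neg_of_add_eq_zero_left hsum
      have hvv : v (x j) ^ 2 = v b * v (y k) ^ 2 := by
        rw [← hvx, heq, v.map_neg, map_mul, hvy]
      apply hb2
      refine ⟨x j / y k, ?_⟩
      rw [map_div₀, div_pow]
      rw [eq_div_iff (pow_ne_zero 2 hvyk)]
      rw [hvv]
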